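/- Let B be a trimmed finitely ambiguous automaton over alphabet containing letter a. Then B cannot contain a path of the form p →^a p →^{a^k} q →^a q with p ≠ q (i.e., a self-loop on a at p, a path reading a^k from p to q, and a self-loop on a at q). -/

import Mathlib

variable {Q Q' A R : Type*}

/-- `RunFrom Δ p w ρ`: `ρ` is the list of states visited after `p` along a run
reading `w` that starts in `p`. -/
def RunFrom (Δ : Q → A → Q → Prop) : Q → List A → List Q → Prop
  | _, [], [] => True
  | p, a :: w, q :: ρ => Δ p a q ∧ RunFrom Δ q w ρ
  | _, _, _ => False

/-- There is a run from `p` to `q` reading `w`. -/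
def HasRun (Δ : Q → A → Q → Prop) (p : Q) (w : List A) (q : Q) : Prop :=
  ∃ ρ, RunFrom Δ p w ρ ∧ (p :: ρ).getLast (List.cons_ne_nil _ _) = q

/-- `m`-fold power of a word. -/
def wpow (u : List A) (m : ℕ) : List A := (List.replicate m u).flatten

/-- Aperiodicity of a nondeterministic automaton. -/
def Aperiodic (Δ : Q → A → Q → Prop) : Prop :=
  ∃ m, 1 ≤ m ∧ ∀ (p q : Q) (u : List A), u ≠ [] →
    (HasRun Δ p (wpow u m) q ↔ HasRun Δ p (wpow u (m + 1)) q)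

/-- `p` and `q` are in the same strongly connected component. -/
def SameSCC (Δ : Q → A → Q → Prop) (p q : Q) : Prop :=
  p = q ∨ ((∃ u : List A, u ≠ [] ∧ HasRun Δ p u q) ∧ (∃ v : List A, v ≠ [] ∧ HasRun Δ q v p))

/-- The automaton is unambiguous from `p` to `q`. -/
def UnambFromTo (Δ : Q → A → Q → Prop) (p q : Q) : Prop :=
  ∀ (u : List A) (ρ₁ ρ₂ : List Q), u ≠ [] →
    RunFrom Δ p u ρ₁ → RunFrom Δ p u ρ₂ →
    (p :: ρ₁).getLast (List.cons_ne_nil _ _) = q →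
    (p :: ρ₂).getLast (List.cons_ne_nil _ _) = q → ρ₁ = ρ₂

def SCCUnambiguous (Δ : Q → A → Q → Prop) : Prop :=
  ∀ p q : Q, SameSCC Δ p q → UnambFromTo Δ p q

/-- The set of accepting runs on `w`, represented as pairs of an initial state and
the list of subsequently visited states. -/
def AccRuns (Δ : Q → A → Q → Prop) (I F : Set Q) (w : List A) : Set (Q × List Q) :=
  {x | x.1 ∈ I ∧ RunFrom Δ x.1 w x.2 ∧ (x.1 :: x.2).getLast (List.cons_ne_nil _ _) ∈ F}

/-- The sequence of weights along a run. -/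
def wgtSeq (wgt : Q → A → Q → R) : Q → List A → List Q → List R
  | p, a :: w, q :: ρ => wgt p a q :: wgtSeq wgt q w ρ
  | _, _, _ => []


section Aux

variable {Δ : Q → A → Q → Prop}

lemma runFrom_length : ∀ {p : Q} {w : List A} {ρ : List Q}, RunFrom Δ p w ρ →
    ρ.length = w.length
  | _, [], [], _ => rfl
  | _, [], _ :: _, h => h.elim
  | _, _ :: _, [], h => h.elim
  | _, _ :: _, _ :: _, h => by
    simpa using runFrom_length h.2

lemma getLast_cons_append (p : Q) (ρ₁ ρ₂ : List Q) :
    (p :: (ρ₁ ++ ρ₂)).getLast (List.cons_ne_nil _ _) =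
      (((p :: ρ₁).getLast (List.cons_ne_nil _ _)) :: ρ₂).getLast (List.cons_ne_nil _ _) := by
  rcases eq_or_ne ρ₂ [] with rfl | h
  · simp
  · have h1 : (p :: (ρ₁ ++ ρ₂)) = (p :: ρ₁) ++ ρ₂ := by simp
    rw [List.getLast_congr _ (by simp) h1, List.getLast_append_of_right_ne_nil _ _ h,
      List.getLast_cons h]

lemma runFrom_append : ∀ {p : Q} {u : List A} {ρ₁ : List Q} {v : List A} {ρ₂ : List Q},
    RunFrom Δ p u ρ₁ → RunFrom Δ ((p :: ρ₁).getLast (List.cons_ne_nil _ _)) v ρ₂ →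
    RunFrom Δ p (u ++ v) (ρ₁ ++ ρ₂)
  | _, [], [], _, _, _, h2 => by simpa using h2
  | _, [], _ :: _, _, _, h1, _ => h1.elim
  | _, _ :: _, [], _, _, h1, _ => h1.elim
  | _, a :: u, s :: ρ₁, v, ρ₂, h1, h2 => by
    refine ⟨h1.1, runFrom_append h1.2 ?_⟩
    simpa using h2

lemma runFrom_split (q : Q) : ∀ {i : Q} {w : List A} {ρ : List Q}, RunFrom Δ i w ρ →
    q ∈ i :: ρ → ∃ (w₁ : List A) (ρ₁ : List Q) (w₂ : List A) (ρ₂ : List Q),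
      w = w₁ ++ w₂ ∧ ρ = ρ₁ ++ ρ₂ ∧ RunFrom Δ i w₁ ρ₁ ∧
      (i :: ρ₁).getLast (List.cons_ne_nil _ _) = q ∧ RunFrom Δ q w₂ ρ₂
  | i, [], [], _, hq => by
    refine ⟨[], [], [], [], rfl, rfl, trivial, ?_, trivial⟩
    simpa using (List.mem_singleton.mp hq).symm
  | _, [], _ :: _, h, _ => h.elim
  | _, _ :: _, [], h, _ => h.elim
  | i, a :: w, s :: ρ, h, hq => by
    rcases List.mem_cons.mp hq with rfl | hq'
    · exact ⟨[], [], _ :: w, s :: ρ, rfl, rfl, trivial, rfl, h⟩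
    · obtain ⟨w₁, ρ₁, w₂, ρ₂, hw, hρ, hr1, hl, hr2⟩ := runFrom_split q h.2 hq'
      exact ⟨a :: w₁, s :: ρ₁, w₂, ρ₂, by simp [hw], by simp [hρ],
        ⟨h.1, hr1⟩, by simpa using hl, hr2⟩

lemma runFrom_replicate {p : Q} {a : A} (hp : Δ p a p) :
    ∀ j : ℕ, RunFrom Δ p (List.replicate j a) (List.replicate j p)
  | 0 => trivial
  | j + 1 => ⟨hp, runFrom_replicate hp j⟩

lemma getLast_cons_replicate (p : Q) (j : ℕ) :
    (p :: List.replicate j p).getLast (List.cons_ne_nil _ _) = p := by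
  have : (p :: List.replicate j p) = List.replicate (j + 1) p := by
    simp [List.replicate_succ]
  rw [List.getLast_congr _ (by simp) this]
  exact List.getLast_replicate_succ j p

lemma accRuns_finite [Finite Q] (I F : Set Q) (w : List A) :
    (AccRuns Δ I F w).Finite := by
  apply Set.Finite.subset (Set.finite_univ.prod (List.finite_length_eq Q w.length))
  rintro ⟨i, ρ⟩ ⟨-, hr, -⟩
  exact ⟨trivial, runFrom_length hr⟩

end Aux

/-- A trimmed finitely ambiguous automaton cannot contain a path
`p →^a p →^{a^k} q →^a q` with `p ≠ q`. -/
theorem no_double_a_loop [Fintype Q] (Δ : Q → A → Q → Prop) (I F : Set Q)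
    (htrim : ∀ q : Q, ∃ (w : List A) (x : Q × List Q),
      x ∈ AccRuns Δ I F w ∧ q ∈ x.1 :: x.2)
    (hfin : ∃ K : ℕ, ∀ w : List A, (AccRuns Δ I F w).ncard ≤ K)
    (p q : Q) (hpq : p ≠ q) (a : A) (k : ℕ)
    (hp : Δ p a p) (hpath : HasRun Δ p (List.replicate k a) q) : ¬ Δ q a q := by
  classical
  intro hq
  obtain ⟨K, hK⟩ := hfin
  obtain ⟨ρk, hρk, hρklast⟩ := hpath
  -- trimmed at p : prefix run from some initial state to p
  obtain ⟨wp, ⟨i, ρ⟩, ⟨hiI, hrun, _⟩, hmem⟩ := htrim p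
  obtain ⟨u, σ, _, _, _, hρeq, hσ, hσlast, _⟩ := runFrom_split p hrun hmem
  -- trimmed at q : suffix run from q to a final state
  obtain ⟨wq, ⟨i', ρ'⟩, ⟨_, hrun', hF'⟩, hmem'⟩ := htrim q
  obtain ⟨_, τ₁, v, τ, _, hρ'eq, _, hτ1last, hτ⟩ := runFrom_split q hrun' hmem'
  have hFτ : (q :: τ).getLast (List.cons_ne_nil _ _) ∈ F := by
    subst hρ'eq
    rw [getLast_cons_append, hτ1last] at hF'
    exact hF'
  set n := K + 1 with hn
  -- the runs
  set run : ℕ → List Q := fun j =>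
    σ ++ (List.replicate j p ++ (ρk ++ (List.replicate (n - j) q ++ τ))) with hrundef
  set w : List A := u ++ (List.replicate (n + k) a ++ v) with hwdef
  have hmemAcc : ∀ j ≤ n, (i, run j) ∈ AccRuns Δ I F w := by
    intro j hj
    have hword : (List.replicate j a ++ (List.replicate k a ++ (List.replicate (n - j) a ++ v)))
        = List.replicate (n + k) a ++ v := by
      rw [← List.append_assoc, ← List.append_assoc, ← List.replicate_add,
        ← List.replicate_add]
      congr 2
      omega
    refine ⟨hiI, ?_, ?_⟩
    · rw [hwdef, ← hword]
      refine runFrom_append hσ ?_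
      rw [hσlast]
      refine runFrom_append (runFrom_replicate hp j) ?_
      rw [getLast_cons_replicate]
      refine runFrom_append hρk ?_
      rw [hρklast]
      refine runFrom_append (runFrom_replicate hq (n - j)) ?_
      rw [getLast_cons_replicate]
      exact hτ
    · show (i :: run j).getLast _ ∈ F
      rw [hrundef]
      simp only
      rw [getLast_cons_append, hσlast, getLast_cons_append, getLast_cons_replicate,
        getLast_cons_append, hρklast, getLast_cons_append, getLast_cons_replicate]
      exact hFτ
  -- the runs are pairwise distinct: count occurrences of `p`
  have hcount : ∀ j, (run j).count p
      = σ.count p + (j + (ρk.count p + τ.count p)) := by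
    intro j
    rw [hrundef]
    simp only [List.count_append, List.count_replicate, beq_self_eq_true, if_pos rfl]
    have : (p == q) = false := by simpa using hpq
    simp [this]
    exact fun h => absurd h.symm hpq
  have hinj : Function.Injective (fun j : Fin (n + 1) => (i, run j.1)) := by
    intro j j' h
    have h2 : run j.1 = run j'.1 := congrArg Prod.snd h
    have := hcount j.1 ▸ hcount j'.1 ▸ congrArg (List.count p) h2
    exact Fin.ext (by omega)
  have hsub : Set.range (fun j : Fin (n + 1) => (i, run j.1)) ⊆ AccRuns Δ I F w := by
    rintro x ⟨j, rfl⟩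
    exact hmemAcc j.1 (by omega)
  have hcard : (Set.range (fun j : Fin (n + 1) => (i, run j.1))).ncard = n + 1 := by
    rw [← Set.image_univ, Set.ncard_image_of_injective _ hinj, Set.ncard_univ]
    simp
  have := Set.ncard_le_ncard hsub (accRuns_finite I F w)
  have := hK w
  omega
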